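/- Let μ ∈ [0,1]^{N×K} with all entries strictly positive, and let p* maximize NSW(p,μ) = ∏_{i=1}^N (∑_j p_j μ_{i,j}) over the K-simplex. Then for every arm j ∈ [K], ∑_{i=1}^N μ_{i,j} / (∑_{k=1}^K p*_k μ_{i,k}) ≤ N, with equality for every j such that p*_j > 0. -/

import Mathlib

open Finset

noncomputable def NSW {N K : ℕ} (p : Fin K → ℝ) (μ : Fin N → Fin K → ℝ) : ℝ :=
  ∏ i, ∑ j, p j * μ i j

def simplex (K : ℕ) : Set (Fin K → ℝ) := {p | (∀ j, 0 ≤ p j) ∧ ∑ j, p j = 1}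

lemma deriv_nonpos_of_max {h : ℝ → ℝ} {d ε : ℝ} (hε : 0 < ε)
    (hd : HasDerivAt h d 0) (hmax : ∀ t, 0 ≤ t → t ≤ ε → h t ≤ h 0) : d ≤ 0 := by
  have hslope : Filter.Tendsto (slope h 0) (nhdsWithin 0 (Set.Ioi 0)) (nhds d) :=
    (hasDerivAt_iff_tendsto_slope.1 hd).mono_left
      (nhdsWithin_mono 0 (fun t ht => ne_of_gt ht))
  refine le_of_tendsto hslope ?_
  filter_upwards [Ioo_mem_nhdsGT_of_mem (Set.mem_Ico.2 ⟨le_refl 0, hε⟩)] with t ht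
  have h1 : h t ≤ h 0 := hmax t ht.1.le ht.2.le
  have : slope h 0 t = (h t - h 0) / t := by simp [slope_def_field]
  rw [this]
  exact div_nonpos_of_nonpos_of_nonneg (by linarith) ht.1.le

lemma key_lemma {N : ℕ} (S c : Fin N → ℝ) (hS : ∀ i, 0 < S i) {ε : ℝ} (hε : 0 < ε)
    (hle : ∀ t : ℝ, 0 ≤ t → t ≤ ε → ∏ i, (S i + t * c i) ≤ ∏ i, S i) :
    ∑ i, c i / S i ≤ 0 := by
  set d : ℝ := ∑ i, (∏ k ∈ univ.erase i, S k) * c i with hd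
  have hderiv : HasDerivAt (fun t : ℝ => ∏ i, (S i + t * c i)) d 0 := by
    have := HasDerivAt.fun_finsetProd (u := (univ : Finset (Fin N)))
      (f := fun i t => S i + t * c i) (f' := c) (x := (0:ℝ))
      (fun i _ => by simpa using ((hasDerivAt_id (0:ℝ)).mul_const (c i)).const_add (S i))
    simpa [smul_eq_mul] using this
  have hd0 : d ≤ 0 := by
    refine deriv_nonpos_of_max hε (by simpa using hderiv) ?_
    intro t ht0 htε
    simpa using hle t ht0 htε
  have hP : 0 < ∏ i, S i := Finset.prod_pos (fun i _ => hS i)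
  have hdP : d = (∏ i, S i) * ∑ i, c i / S i := by
    rw [Finset.mul_sum]
    refine Finset.sum_congr rfl (fun i _ => ?_)
    have hSi : S i ≠ 0 := (hS i).ne'
    have := Finset.mul_prod_erase univ S (mem_univ i)
    field_simp
    rw [← this]; ring
  nlinarith [hd0, hP, hdP]

theorem nsw_first_order_condition (N K : ℕ) (hN : 0 < N) (hK : 0 < K)
    (μ : Fin N → Fin K → ℝ) (hμpos : ∀ i j, 0 < μ i j) (hμle : ∀ i j, μ i j ≤ 1)
    (pstar : Fin K → ℝ) (hpstar : pstar ∈ simplex K)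
    (hmax : ∀ q ∈ simplex K, NSW q μ ≤ NSW pstar μ) :
    ∀ j : Fin K,
      (∑ i, μ i j / (∑ k, pstar k * μ i k)) ≤ (N : ℝ) ∧
      (0 < pstar j → (∑ i, μ i j / (∑ k, pstar k * μ i k)) = (N : ℝ)) := by
  obtain ⟨hp0, hp1⟩ := hpstar
  set S : Fin N → ℝ := fun i => ∑ k, pstar k * μ i k with hSdef
  have hS : ∀ i, 0 < S i := by
    intro i
    obtain ⟨k0, hk0⟩ : ∃ k, 0 < pstar k := by
      by_contra hcon
      push_neg at hcon
      have : ∑ k, pstar k ≤ 0 := Finset.sum_nonpos (fun k _ => hcon k)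
      rw [hp1] at this; linarith
    exact Finset.sum_pos' (fun k _ => mul_nonneg (hp0 k) (hμpos i k).le)
      ⟨k0, mem_univ k0, mul_pos hk0 (hμpos i k0)⟩
  have hpj_le : ∀ j, pstar j ≤ 1 := by
    intro j
    rw [← hp1]
    exact Finset.single_le_sum (fun k _ => hp0 k) (mem_univ j)
  have hNSW : NSW pstar μ = ∏ i, S i := rfl
  intro j
  -- common computation: for any dvec with ∑ dvec = 0 and q in simplex,
  have hsum_e : ∀ i, ∑ k, (if k = j then (1:ℝ) else 0) * μ i k = μ i j := by
    intro i
    simp [ite_mul, Finset.sum_ite_eq' univ j (fun k => μ i k)]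
  have hNSWq : ∀ (t : ℝ) (dvec : Fin K → ℝ),
      NSW (fun k => pstar k + t * dvec k) μ
        = ∏ i, (S i + t * ∑ k, dvec k * μ i k) := by
    intro t dvec
    unfold NSW
    refine Finset.prod_congr rfl (fun i _ => ?_)
    rw [Finset.mul_sum, ← Finset.sum_add_distrib]
    refine Finset.sum_congr rfl (fun k _ => ?_)
    ring
  -- Upper bound
  have hupper : ∑ i, (μ i j - S i) / S i ≤ 0 := by
    refine key_lemma S (fun i => μ i j - S i) hS (ε := 1) one_pos ?_
    intro t ht0 ht1
    set dvec : Fin K → ℝ := fun k => (if k = j then (1:ℝ) else 0) - pstar k with hdv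
    have hmem : (fun k => pstar k + t * dvec k) ∈ simplex K := by
      constructor
      · intro k
        show 0 ≤ pstar k + t * dvec k
        simp only [hdv]
        have he : (0:ℝ) ≤ (if k = j then (1:ℝ) else 0) := by positivity
        nlinarith [hp0 k]
      · simp only [hdv]
        rw [Finset.sum_add_distrib, hp1, ← Finset.mul_sum, Finset.sum_sub_distrib, hp1]
        simp
    have := hmax _ hmem
    rw [hNSWq t dvec, hNSW] at this
    have hc : ∀ i, ∑ k, dvec k * μ i k = μ i j - S i := by
      intro i
      simp only [hdv, sub_mul, Finset.sum_sub_distrib, hsum_e i, hSdef]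
    simpa [hc] using this
  have hT_le : ∑ i, μ i j / S i ≤ (N : ℝ) := by
    have heq : ∑ i, (μ i j - S i) / S i = (∑ i, μ i j / S i) - (N : ℝ) := by
      have h1 : ∀ i ∈ univ, (μ i j - S i) / S i = μ i j / S i - 1 := fun i _ => by
        rw [sub_div, div_self (hS i).ne']
      rw [Finset.sum_congr rfl h1, Finset.sum_sub_distrib]
      simp
    linarith [hupper, heq.le, heq.ge]
  refine ⟨hT_le, fun hpj => ?_⟩
  -- Lower bound when pstar j > 0
  have hlower : ∑ i, (S i - μ i j) / S i ≤ 0 := by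
    refine key_lemma S (fun i => S i - μ i j) hS (ε := pstar j) hpj ?_
    intro t ht0 htε
    set dvec : Fin K → ℝ := fun k => pstar k - (if k = j then (1:ℝ) else 0) with hdv
    have hmem : (fun k => pstar k + t * dvec k) ∈ simplex K := by
      constructor
      · intro k
        show 0 ≤ pstar k + t * dvec k
        simp only [hdv]
        by_cases hk : k = j
        · subst hk
          rw [if_pos rfl]
          nlinarith [hpj_le k, hp0 k]
        · rw [if_neg hk]
          nlinarith [hp0 k]
      · simp only [hdv]
        rw [Finset.sum_add_distrib, hp1, ← Finset.mul_sum, Finset.sum_sub_distrib, hp1]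
        simp
    have := hmax _ hmem
    rw [hNSWq t dvec, hNSW] at this
    have hc : ∀ i, ∑ k, dvec k * μ i k = S i - μ i j := by
      intro i
      simp only [hdv, sub_mul, Finset.sum_sub_distrib, hsum_e i, hSdef]
    simpa [hc] using this
  have hT_ge : (N : ℝ) ≤ ∑ i, μ i j / S i := by
    have heq : ∑ i, (S i - μ i j) / S i = (N : ℝ) - ∑ i, μ i j / S i := by
      have h1 : ∀ i ∈ univ, (S i - μ i j) / S i = 1 - μ i j / S i := fun i _ => by
        rw [sub_div, div_self (hS i).ne']
      rw [Finset.sum_congr rfl h1, Finset.sum_sub_distrib]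
      simp
    linarith [hlower, heq.le, heq.ge]
  linarith
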